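/- Let K be a countable field K = {a_0, a_1, a_2, …} with a_0 = 0, a_1 = 1. Then there exist power series γ(t), β(t) ∈ K[[t]] such that the linear ODE y'' + γ(t)y' + β(t)y = 0 has solution space spanned by φ_1 = 1 + Σ_{i≥2} t^i and φ_2 = t + Σ_{i≥2} a_i t^i; moreover the union of supports supp(φ_1) ∪ supp(φ_2) = ℕ is not the support of any solution, since every nonzero solution has support ℕ \ {j} for some j ∈ ℕ. -/

import Mathlib

open PowerSeries

/-- Formal derivative of a univariate power series. -/
noncomputable def Dser {K : Type*} [Field K] (y : PowerSeries K) : PowerSeries K :=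
  PowerSeries.mk fun i => ((i + 1 : ℕ) : K) * PowerSeries.coeff (R := K) (i + 1) y

/-- φ₁ = 1 + Σ_{i≥2} t^i. -/
noncomputable def phiOne (K : Type*) [Field K] : PowerSeries K :=
  PowerSeries.mk fun i => if i = 1 then 0 else 1

lemma coeff_Dser {K : Type*} [Field K] (y : PowerSeries K) (n : ℕ) :
    PowerSeries.coeff (R := K) n (Dser y) = ((n + 1 : ℕ) : K) * PowerSeries.coeff (R := K) (n + 1) y := by
  simp [Dser]

lemma Dser_add {K : Type*} [Field K] (y z : PowerSeries K) :
    Dser (y + z) = Dser y + Dser z := by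
  ext n; simp [coeff_Dser, mul_add]

lemma Dser_sub {K : Type*} [Field K] (y z : PowerSeries K) :
    Dser (y - z) = Dser y - Dser z := by
  ext n; simp [coeff_Dser, mul_sub]

lemma Dser_smul {K : Type*} [Field K] (c : K) (y : PowerSeries K) :
    Dser (c • y) = c • Dser y := by
  ext n; simp [coeff_Dser]; ring

/-- Uniqueness: a solution with vanishing first two coefficients is zero. -/
lemma sol_unique {K : Type*} [Field K] [CharZero K] (γ β z : PowerSeries K)
    (hL : Dser (Dser z) + γ * Dser z + β * z = 0)
    (hz0 : PowerSeries.coeff (R := K) 0 z = 0) (hz1 : PowerSeries.coeff (R := K) 1 z = 0) : z = 0 := by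
  have main : ∀ n, PowerSeries.coeff (R := K) n z = 0 := by
    intro n
    induction n using Nat.strong_induction_on with
    | _ n ih =>
      match n with
      | 0 => exact hz0
      | 1 => exact hz1
      | (m + 2) =>
        have h := congrArg (PowerSeries.coeff (R := K) m) hL
        rw [map_add, map_add, map_zero, coeff_Dser, coeff_Dser, coeff_mul, coeff_mul] at h
        have hs1 : ∑ p ∈ Finset.HasAntidiagonal.antidiagonal m,
            PowerSeries.coeff (R := K) p.1 γ * PowerSeries.coeff (R := K) p.2 (Dser z) = 0 := by
          apply Finset.sum_eq_zero
          intro p hp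
          have hpm : p.1 + p.2 = m := Finset.HasAntidiagonal.mem_antidiagonal.mp hp
          rw [coeff_Dser, ih (p.2 + 1) (by omega), mul_zero, mul_zero]
        have hs2 : ∑ p ∈ Finset.HasAntidiagonal.antidiagonal m,
            PowerSeries.coeff (R := K) p.1 β * PowerSeries.coeff (R := K) p.2 z = 0 := by
          apply Finset.sum_eq_zero
          intro p hp
          have hpm : p.1 + p.2 = m := Finset.HasAntidiagonal.mem_antidiagonal.mp hp
          rw [ih p.2 (by omega), mul_zero]
        rw [hs1, hs2, add_zero, add_zero] at h
        rcases mul_eq_zero.mp h with h' | h'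
        · exact absurd h' (Nat.cast_ne_zero.mpr (by omega))
        · rcases mul_eq_zero.mp h' with h'' | h''
          · exact absurd h'' (Nat.cast_ne_zero.mpr (by omega))
          · exact h''
  ext n; rw [main n, map_zero]

theorem stmt17 {K : Type*} [Field K] [CharZero K] (a : ℕ → K)
    (h0 : a 0 = 0) (h1 : a 1 = 1)
    (hne : ∀ i, 2 ≤ i → a i ≠ 0)
    (hex : ∀ c : K, c ≠ 0 → ∃! i, 2 ≤ i ∧ a i = c) :
    ∃ γ β : PowerSeries K,
      (∀ y : PowerSeries K,
        Dser (Dser y) + γ * Dser y + β * y = 0 ↔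
          y ∈ Submodule.span K ({phiOne K, PowerSeries.mk a} : Set (PowerSeries K))) ∧
      ({i | PowerSeries.coeff (R := K) i (phiOne K) ≠ 0} ∪
        {i | PowerSeries.coeff (R := K) i (PowerSeries.mk a) ≠ 0} = Set.univ) ∧
      (∀ y : PowerSeries K, Dser (Dser y) + γ * Dser y + β * y = 0 → y ≠ 0 →
        ∃ j : ℕ, {i | PowerSeries.coeff (R := K) i y ≠ 0} = {j}ᶜ) ∧
      (∀ y : PowerSeries K, Dser (Dser y) + γ * Dser y + β * y = 0 →
        {i | PowerSeries.coeff (R := K) i y ≠ 0} ≠ Set.univ) := by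
  classical
  set φ₁ : PowerSeries K := phiOne K with hφ₁
  set φ₂ : PowerSeries K := PowerSeries.mk a with hφ₂
  have hc1 : ∀ i, PowerSeries.coeff (R := K) i φ₁ = if i = 1 then 0 else 1 := fun i => by
    simp [hφ₁, phiOne]
  have hc2 : ∀ i, PowerSeries.coeff (R := K) i φ₂ = a i := fun i => by simp [hφ₂]
  set W : PowerSeries K := φ₁ * Dser φ₂ - φ₂ * Dser φ₁ with hW
  have hW0 : PowerSeries.coeff (R := K) 0 W = 1 := by
    rw [hW, map_sub, coeff_mul, coeff_mul, Finset.Nat.antidiagonal_zero,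
      Finset.sum_singleton, Finset.sum_singleton, coeff_Dser, coeff_Dser,
      hc1 0, hc2 0, hc1 1, hc2 1, h0, h1, if_pos rfl, if_neg (by norm_num : (0:ℕ) ≠ 1)]
    norm_num
  have hWne : W ≠ 0 := fun h => by rw [h, map_zero] at hW0; exact one_ne_zero hW0.symm
  have hWinv : W * W⁻¹ = 1 := PowerSeries.mul_inv_cancel _ (by
    rw [← coeff_zero_eq_constantCoeff, hW0]; exact one_ne_zero)
  set A : PowerSeries K := φ₁ * Dser (Dser φ₂) - φ₂ * Dser (Dser φ₁) with hA
  set B : PowerSeries K := Dser φ₁ * Dser (Dser φ₂) - Dser φ₂ * Dser (Dser φ₁) with hB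
  refine ⟨-A * W⁻¹, B * W⁻¹, ?_⟩
  set γ : PowerSeries K := -A * W⁻¹ with hγ
  set β : PowerSeries K := B * W⁻¹ with hβ
  have hWγ : W * γ = -A := by
    rw [hγ]
    calc W * (-A * W⁻¹) = -A * (W * W⁻¹) := by ring
    _ = -A := by rw [hWinv, mul_one]
  have hWβ : W * β = B := by
    rw [hβ]
    calc W * (B * W⁻¹) = B * (W * W⁻¹) := by ring
    _ = B := by rw [hWinv, mul_one]
  have key : ∀ y : PowerSeries K,
      Dser (Dser y) + γ * Dser y + β * y = 0 ↔
      W * Dser (Dser y) + (-A) * Dser y + B * y = 0 := by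
    intro y
    constructor
    · intro h
      rw [← hWγ, ← hWβ]
      calc W * Dser (Dser y) + W * γ * Dser y + W * β * y
          = W * (Dser (Dser y) + γ * Dser y + β * y) := by ring
        _ = 0 := by rw [h, mul_zero]
    · intro h
      have h2 : W * (Dser (Dser y) + γ * Dser y + β * y) = 0 := by
        calc W * (Dser (Dser y) + γ * Dser y + β * y)
            = W * Dser (Dser y) + (W * γ) * Dser y + (W * β) * y := by ring
          _ = W * Dser (Dser y) + (-A) * Dser y + B * y := by rw [hWγ, hWβ]
          _ = 0 := h
      exact (mul_eq_zero.mp h2).resolve_left hWne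
  have hsol1 : Dser (Dser φ₁) + γ * Dser φ₁ + β * φ₁ = 0 := by
    rw [key, hW, hA, hB]; ring
  have hsol2 : Dser (Dser φ₂) + γ * Dser φ₂ + β * φ₂ = 0 := by
    rw [key, hW, hA, hB]; ring
  have hspan_sol : ∀ y, y ∈ Submodule.span K ({φ₁, φ₂} : Set (PowerSeries K)) →
      Dser (Dser y) + γ * Dser y + β * y = 0 := by
    intro y hy
    obtain ⟨c, d, rfl⟩ := Submodule.mem_span_pair.mp hy
    have e : Dser (Dser (c • φ₁ + d • φ₂)) + γ * Dser (c • φ₁ + d • φ₂)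
        + β * (c • φ₁ + d • φ₂)
        = c • (Dser (Dser φ₁) + γ * Dser φ₁ + β * φ₁)
          + d • (Dser (Dser φ₂) + γ * Dser φ₂ + β * φ₂) := by
      rw [Dser_add, Dser_smul, Dser_smul, Dser_add, Dser_smul, Dser_smul]
      simp only [smul_add, mul_add, mul_smul_comm]
      abel
    rw [e, hsol1, hsol2, smul_zero, smul_zero, add_zero]
  have hiff : ∀ y : PowerSeries K,
      Dser (Dser y) + γ * Dser y + β * y = 0 ↔
        y ∈ Submodule.span K ({φ₁, φ₂} : Set (PowerSeries K)) := by
    intro y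
    constructor
    · intro hy
      set c := PowerSeries.coeff (R := K) 0 y with hcdef
      set d := PowerSeries.coeff (R := K) 1 y with hddef
      have hwmem : (c • φ₁ + d • φ₂) ∈
          Submodule.span K ({φ₁, φ₂} : Set (PowerSeries K)) :=
        Submodule.mem_span_pair.mpr ⟨c, d, rfl⟩
      have hw := hspan_sol _ hwmem
      have hzeq : Dser (Dser (y - (c • φ₁ + d • φ₂)))
          + γ * Dser (y - (c • φ₁ + d • φ₂)) + β * (y - (c • φ₁ + d • φ₂))
          = (Dser (Dser y) + γ * Dser y + β * y)
            - (Dser (Dser (c • φ₁ + d • φ₂)) + γ * Dser (c • φ₁ + d • φ₂)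
              + β * (c • φ₁ + d • φ₂)) := by
        rw [Dser_sub, Dser_sub]; ring
      have hz : y - (c • φ₁ + d • φ₂) = 0 := by
        apply sol_unique γ β
        · rw [hzeq, hy, hw, sub_zero]
        · rw [map_sub, map_add, map_smul, map_smul, smul_eq_mul, smul_eq_mul, hc1 0, hc2 0,
            h0, if_neg (by norm_num : (0:ℕ) ≠ 1), mul_one, mul_zero, add_zero, ← hcdef,
            sub_self]
        · rw [map_sub, map_add, map_smul, map_smul, smul_eq_mul, smul_eq_mul, hc1 1, hc2 1,
            h1, if_pos rfl, mul_zero, mul_one, zero_add, ← hddef, sub_self]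
      have : y = c • φ₁ + d • φ₂ := by
        rw [sub_eq_zero] at hz; exact hz
      rw [this]; exact hwmem
    · exact hspan_sol y
  have hthird : ∀ y : PowerSeries K, Dser (Dser y) + γ * Dser y + β * y = 0 → y ≠ 0 →
      ∃ j : ℕ, {i | PowerSeries.coeff (R := K) i y ≠ 0} = {j}ᶜ := by
    intro y hy hy0
    obtain ⟨c, d, rfl⟩ := Submodule.mem_span_pair.mp ((hiff y).mp hy)
    have hco : ∀ i, PowerSeries.coeff (R := K) i (c • φ₁ + d • φ₂)
        = c * (if i = 1 then 0 else 1) + d * a i := by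
      intro i; simp [hc1, hc2]
    by_cases hd : d = 0
    · have hc : c ≠ 0 := by
        intro h; exact hy0 (by rw [h, hd, zero_smul, zero_smul, add_zero])
      refine ⟨1, ?_⟩
      ext i
      simp only [Set.mem_setOf_eq, Set.mem_compl_iff, Set.mem_singleton_iff]
      rw [hco i, hd, zero_mul, add_zero]
      by_cases hi : i = 1
      · rw [if_pos hi, mul_zero]; simp [hi]
      · rw [if_neg hi, mul_one]; simp [hi, hc]
    · by_cases hc : c = 0
      · refine ⟨0, ?_⟩
        ext i
        simp only [Set.mem_setOf_eq, Set.mem_compl_iff, Set.mem_singleton_iff]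
        rw [hco i, hc, zero_mul, zero_add]
        match i with
        | 0 => rw [h0, mul_zero]; simp
        | 1 => rw [h1, mul_one]; simp [hd]
        | (i + 2) => simp [mul_ne_zero hd (hne (i + 2) (by omega))]
      · have hcd : -c / d ≠ 0 := div_ne_zero (neg_ne_zero.mpr hc) hd
        obtain ⟨j, ⟨hj2, hja⟩, hjun⟩ := hex _ hcd
        refine ⟨j, ?_⟩
        ext i
        simp only [Set.mem_setOf_eq, Set.mem_compl_iff, Set.mem_singleton_iff]
        rw [hco i]
        match i with
        | 0 =>
          rw [h0, mul_zero, add_zero, if_neg (by norm_num : (0:ℕ) ≠ 1), mul_one]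
          exact iff_of_true hc (by omega)
        | 1 =>
          rw [h1, mul_one, if_pos rfl, mul_zero, zero_add]
          exact iff_of_true hd (by omega)
        | (i + 2) =>
          rw [if_neg (by omega : i + 2 ≠ 1), mul_one]
          have key2 : c + d * a (i + 2) = 0 ↔ i + 2 = j := by
            constructor
            · intro h
              have hai : a (i + 2) = -c / d := by
                field_simp
                linear_combination h
              exact hjun (i + 2) ⟨by omega, hai⟩
            · intro h
              rw [h, hja]
              field_simp
              ring
          exact not_congr key2
  refine ⟨hiff, ?_, hthird, ?_⟩
  · ext i
    simp only [Set.mem_union, Set.mem_setOf_eq, Set.mem_univ, iff_true, hc1, hc2]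
    by_cases hi : i = 1
    · right; rw [hi, h1]; exact one_ne_zero
    · left; rw [if_neg hi]; exact one_ne_zero
  · intro y hy hcon
    by_cases h : y = 0
    · have h0' : (0 : ℕ) ∈ {i | PowerSeries.coeff (R := K) i y ≠ 0} := hcon ▸ Set.mem_univ 0
      rw [h] at h0'; simp at h0'
    · obtain ⟨j, hj⟩ := hthird y hy h
      have hjmem : j ∈ {i | PowerSeries.coeff (R := K) i y ≠ 0} := hcon ▸ Set.mem_univ j
      rw [hj] at hjmem
      exact hjmem rfl
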